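/- Let k, c be real numbers with k ≠ 0, and define u(x,t) = (c² - 8k⁴ - k²)/(6k²) - 2k²·tan²(ct + kx). Then u satisfies the fourth-order Boussinesq equation u_{tt} = u_{xx} + 3·(u²)_{xx} + u_{xxxx} at every point (x,t) ∈ ℝ² with cos(ct + kx) ≠ 0. -/

import Mathlib

private lemma tan_affine_hasDeriv {a b s : ℝ} (h : Real.cos (a * s + b) ≠ 0) :
    HasDerivAt (fun y => Real.tan (a * y + b)) (a * (1 + Real.tan (a * s + b) ^ 2)) s := by
  have h1 : HasDerivAt (fun y : ℝ => a * y + b) a s := by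
    simpa using ((hasDerivAt_id s).const_mul a).add_const b
  have h2 := (Real.hasDerivAt_tan h).comp s h1
  refine HasDerivAt.congr_deriv h2 ?_
  have h3 : 1 / Real.cos (a * s + b) ^ 2 = 1 + Real.tan (a * s + b) ^ 2 := by
    rw [← Real.inv_one_add_tan_sq h, one_div, inv_inv]
  rw [h3]; ring

private lemma comp_hasDeriv {a b s : ℝ} (h : Real.cos (a * s + b) ≠ 0)
    (p p' : ℝ → ℝ) (hp : ∀ z, HasDerivAt p (p' z) z) :
    HasDerivAt (fun y => p (Real.tan (a * y + b)))
      (p' (Real.tan (a * s + b)) * (a * (1 + Real.tan (a * s + b) ^ 2))) s :=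
  (hp _).comp s (tan_affine_hasDeriv h)

private lemma deriv_congr_on {a b s : ℝ} (h : Real.cos (a * s + b) ≠ 0) {f g : ℝ → ℝ}
    (hfg : ∀ y, Real.cos (a * y + b) ≠ 0 → f y = g y) :
    deriv f s = deriv g s := by
  apply Filter.EventuallyEq.deriv_eq
  have hc : Continuous fun y : ℝ => Real.cos (a * y + b) := by continuity
  have hopen : IsOpen {y : ℝ | Real.cos (a * y + b) ≠ 0} :=
    hc.isOpen_preimage _ isOpen_ne
  filter_upwards [hopen.mem_nhds h] with y hy using hfg y hy

private lemma deriv2_comp {a b : ℝ} (p0 p1 p2 : ℝ → ℝ)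
    (h1 : ∀ z, HasDerivAt p0 (p1 z) z)
    (h2 : ∀ z, HasDerivAt (fun w => p1 w * (a * (1 + w ^ 2))) (p2 z) z)
    {s : ℝ} (h : Real.cos (a * s + b) ≠ 0) :
    deriv (deriv (fun y => p0 (Real.tan (a * y + b)))) s
      = p2 (Real.tan (a * s + b)) * (a * (1 + Real.tan (a * s + b) ^ 2)) := by
  have e1 : ∀ y, Real.cos (a * y + b) ≠ 0 →
      deriv (fun y => p0 (Real.tan (a * y + b))) y
        = (fun y => (fun w => p1 w * (a * (1 + w ^ 2))) (Real.tan (a * y + b))) y :=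
    fun y hy => (comp_hasDeriv hy p0 p1 h1).deriv
  calc deriv (deriv fun y => p0 (Real.tan (a * y + b))) s
      = deriv (fun y => (fun w => p1 w * (a * (1 + w ^ 2))) (Real.tan (a * y + b))) s :=
        deriv_congr_on h e1
    _ = _ := (comp_hasDeriv h _ p2 h2).deriv

private lemma deriv4_comp {a b : ℝ} (p0 p1 p2 p3 p4 : ℝ → ℝ)
    (h1 : ∀ z, HasDerivAt p0 (p1 z) z)
    (h2 : ∀ z, HasDerivAt (fun w => p1 w * (a * (1 + w ^ 2))) (p2 z) z)
    (h3 : ∀ z, HasDerivAt (fun w => p2 w * (a * (1 + w ^ 2))) (p3 z) z)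
    (h4 : ∀ z, HasDerivAt (fun w => p3 w * (a * (1 + w ^ 2))) (p4 z) z)
    {s : ℝ} (h : Real.cos (a * s + b) ≠ 0) :
    deriv (deriv (deriv (deriv (fun y => p0 (Real.tan (a * y + b)))))) s
      = p4 (Real.tan (a * s + b)) * (a * (1 + Real.tan (a * s + b) ^ 2)) := by
  have e1 : ∀ y, Real.cos (a * y + b) ≠ 0 →
      deriv (fun y => p0 (Real.tan (a * y + b))) y
        = (fun y => (fun w => p1 w * (a * (1 + w ^ 2))) (Real.tan (a * y + b))) y :=
    fun y hy => (comp_hasDeriv hy p0 p1 h1).deriv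
  have e2 : ∀ y, Real.cos (a * y + b) ≠ 0 →
      deriv (deriv (fun y => p0 (Real.tan (a * y + b)))) y
        = (fun y => (fun w => p2 w * (a * (1 + w ^ 2))) (Real.tan (a * y + b))) y := by
    intro y hy
    calc deriv (deriv fun y => p0 (Real.tan (a * y + b))) y
        = deriv (fun y => (fun w => p1 w * (a * (1 + w ^ 2))) (Real.tan (a * y + b))) y :=
          deriv_congr_on hy e1
      _ = _ := (comp_hasDeriv hy _ p2 h2).deriv
  have e3 : ∀ y, Real.cos (a * y + b) ≠ 0 →
      deriv (deriv (deriv (fun y => p0 (Real.tan (a * y + b))))) y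
        = (fun y => (fun w => p3 w * (a * (1 + w ^ 2))) (Real.tan (a * y + b))) y := by
    intro y hy
    calc deriv (deriv (deriv fun y => p0 (Real.tan (a * y + b)))) y
        = deriv (fun y => (fun w => p2 w * (a * (1 + w ^ 2))) (Real.tan (a * y + b))) y :=
          deriv_congr_on hy e2
      _ = _ := (comp_hasDeriv hy _ p3 h3).deriv
  calc deriv (deriv (deriv (deriv fun y => p0 (Real.tan (a * y + b))))) s
      = deriv (fun y => (fun w => p3 w * (a * (1 + w ^ 2))) (Real.tan (a * y + b))) s :=
        deriv_congr_on h e3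
    _ = _ := (comp_hasDeriv h _ p4 h4).deriv

private lemma hasDerivAt_poly (e0 e1 e2 e3 e4 z : ℝ) :
    HasDerivAt (fun w : ℝ => e0 + e1 * w + e2 * w ^ 2 + e3 * w ^ 3 + e4 * w ^ 4)
      (e1 + 2 * e2 * z + 3 * e3 * z ^ 2 + 4 * e4 * z ^ 3) z := by
  have h1 := (hasDerivAt_id z).const_mul e1
  have h2 := (hasDerivAt_pow 2 z).const_mul e2
  have h3 := (hasDerivAt_pow 3 z).const_mul e3
  have h4 := (hasDerivAt_pow 4 z).const_mul e4
  have h := (((h1.const_add e0).add h2).add h3).add h4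
  refine h.congr_deriv ?_
  push_cast; ring

private lemma hasDerivAt_of_eq {F : ℝ → ℝ} {v : ℝ} (G : ℝ → ℝ) (v' z : ℝ)
    (h : HasDerivAt F v z) (hFG : ∀ w, F w = G w) (hv : v = v') :
    HasDerivAt G v' z := by
  subst hv
  exact (funext hFG : F = G) ▸ h

/-- For k ≠ 0, u(x,t) = (c²-8k⁴-k²)/(6k²) - 2k²·tan²(ct+kx) satisfies the
fourth-order Boussinesq equation u_{tt} = u_{xx} + 3·(u²)_{xx} + u_{xxxx} at every
point (x,t) with cos(ct+kx) ≠ 0. -/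
theorem tan_solution_of_Boussinesq (k c : ℝ) (hk : k ≠ 0) (u : ℝ → ℝ → ℝ)
    (hu : ∀ x t : ℝ,
      u x t = (c ^ 2 - 8 * k ^ 4 - k ^ 2) / (6 * k ^ 2)
        - 2 * k ^ 2 * Real.tan (c * t + k * x) ^ 2) :
    ∀ x t : ℝ, Real.cos (c * t + k * x) ≠ 0 →
      deriv (deriv (fun t' : ℝ => u x t')) t =
        deriv (deriv (fun x' : ℝ => u x' t)) x
          + 3 * deriv (deriv (fun x' : ℝ => (u x' t) ^ 2)) x
          + deriv (deriv (deriv (deriv (fun x' : ℝ => u x' t)))) x := by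
  intro x t hcos
  have hcosx : Real.cos (k * x + c * t) ≠ 0 := by rwa [add_comm]
  set A : ℝ := (c ^ 2 - 8 * k ^ 4 - k ^ 2) / (6 * k ^ 2) with hA
  have haux : ∀ (a z : ℝ), HasDerivAt (fun w : ℝ => a * (1 + w ^ 2)) (a * (2 * z)) z := by
    intro a z
    have h := ((hasDerivAt_pow 2 z).const_add 1).const_mul a
    refine h.congr_deriv ?_
    push_cast; ring
  -- derivatives of the basic polynomial chains
  have h1t : ∀ z : ℝ, HasDerivAt (fun z : ℝ => A - 2 * k ^ 2 * z ^ 2) (-(4 * k ^ 2) * z) z :=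
    fun z => hasDerivAt_of_eq _ _ z (hasDerivAt_poly A 0 (-(2 * k ^ 2)) 0 0 z)
      (fun w => by ring) (by ring)
  have h2t : ∀ z : ℝ, HasDerivAt (fun w : ℝ => (-(4 * k ^ 2) * w) * (c * (1 + w ^ 2)))
      (-(4 * k ^ 2 * c) - 12 * k ^ 2 * c * z ^ 2) z :=
    fun z => hasDerivAt_of_eq _ _ z
      ((hasDerivAt_poly 0 (-(4 * k ^ 2)) 0 0 0 z).mul (haux c z))
      (fun w => by simp only [Pi.mul_apply]; ring) (by ring)
  have h2x : ∀ z : ℝ, HasDerivAt (fun w : ℝ => (-(4 * k ^ 2) * w) * (k * (1 + w ^ 2)))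
      (-(4 * k ^ 3) - 12 * k ^ 3 * z ^ 2) z :=
    fun z => hasDerivAt_of_eq _ _ z
      ((hasDerivAt_poly 0 (-(4 * k ^ 2)) 0 0 0 z).mul (haux k z))
      (fun w => by simp only [Pi.mul_apply]; ring) (by ring)
  have h3x : ∀ z : ℝ, HasDerivAt
      (fun w : ℝ => (-(4 * k ^ 3) - 12 * k ^ 3 * w ^ 2) * (k * (1 + w ^ 2)))
      (-(32 * k ^ 4) * z - 48 * k ^ 4 * z ^ 3) z :=
    fun z => hasDerivAt_of_eq _ _ z
      ((hasDerivAt_poly (-(4 * k ^ 3)) 0 (-(12 * k ^ 3)) 0 0 z).mul (haux k z))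
      (fun w => by simp only [Pi.mul_apply]; ring) (by ring)
  have h4x : ∀ z : ℝ, HasDerivAt
      (fun w : ℝ => (-(32 * k ^ 4) * w - 48 * k ^ 4 * w ^ 3) * (k * (1 + w ^ 2)))
      (-(32 * k ^ 5) - 240 * k ^ 5 * z ^ 2 - 240 * k ^ 5 * z ^ 4) z :=
    fun z => hasDerivAt_of_eq _ _ z
      ((hasDerivAt_poly 0 (-(32 * k ^ 4)) 0 (-(48 * k ^ 4)) 0 z).mul (haux k z))
      (fun w => by simp only [Pi.mul_apply]; ring) (by ring)
  have h1s : ∀ z : ℝ, HasDerivAt (fun z : ℝ => (A - 2 * k ^ 2 * z ^ 2) ^ 2)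
      (-(8 * A * k ^ 2) * z + 16 * k ^ 4 * z ^ 3) z :=
    fun z => hasDerivAt_of_eq _ _ z
      (hasDerivAt_poly (A ^ 2) 0 (-(4 * A * k ^ 2)) 0 (4 * k ^ 4) z)
      (fun w => by ring) (by ring)
  have h2s : ∀ z : ℝ, HasDerivAt
      (fun w : ℝ => (-(8 * A * k ^ 2) * w + 16 * k ^ 4 * w ^ 3) * (k * (1 + w ^ 2)))
      (-(8 * A * k ^ 3) + (48 * k ^ 5 - 24 * A * k ^ 3) * z ^ 2 + 80 * k ^ 5 * z ^ 4) z :=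
    fun z => hasDerivAt_of_eq _ _ z
      ((hasDerivAt_poly 0 (-(8 * A * k ^ 2)) 0 (16 * k ^ 4) 0 z).mul (haux k z))
      (fun w => by simp only [Pi.mul_apply]; ring) (by ring)
  -- rewrite the functions in the goal
  have hft : (fun t' : ℝ => u x t')
      = fun t' : ℝ => A - 2 * k ^ 2 * Real.tan (c * t' + k * x) ^ 2 := by
    funext t'; rw [hu, hA]
  have hfx : (fun x' : ℝ => u x' t)
      = fun x' : ℝ => A - 2 * k ^ 2 * Real.tan (k * x' + c * t) ^ 2 := by
    funext x'; rw [hu, add_comm (c * t) (k * x'), hA]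
  have hfs : (fun x' : ℝ => (u x' t) ^ 2)
      = fun x' : ℝ => (A - 2 * k ^ 2 * Real.tan (k * x' + c * t) ^ 2) ^ 2 := by
    funext x'; rw [hu, add_comm (c * t) (k * x'), hA]
  -- the four derivative computations
  have L1 : deriv (deriv (fun t' : ℝ => A - 2 * k ^ 2 * Real.tan (c * t' + k * x) ^ 2)) t
      = (-(4 * k ^ 2 * c) - 12 * k ^ 2 * c * Real.tan (c * t + k * x) ^ 2)
          * (c * (1 + Real.tan (c * t + k * x) ^ 2)) :=
    deriv2_comp (fun z => A - 2 * k ^ 2 * z ^ 2) (fun z => -(4 * k ^ 2) * z)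
      (fun z => -(4 * k ^ 2 * c) - 12 * k ^ 2 * c * z ^ 2) h1t h2t hcos
  have L2 : deriv (deriv (fun x' : ℝ => A - 2 * k ^ 2 * Real.tan (k * x' + c * t) ^ 2)) x
      = (-(4 * k ^ 3) - 12 * k ^ 3 * Real.tan (k * x + c * t) ^ 2)
          * (k * (1 + Real.tan (k * x + c * t) ^ 2)) :=
    deriv2_comp (fun z => A - 2 * k ^ 2 * z ^ 2) (fun z => -(4 * k ^ 2) * z)
      (fun z => -(4 * k ^ 3) - 12 * k ^ 3 * z ^ 2) h1t h2x hcosx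
  have L3 : deriv (deriv (fun x' : ℝ =>
        (A - 2 * k ^ 2 * Real.tan (k * x' + c * t) ^ 2) ^ 2)) x
      = (-(8 * A * k ^ 3) + (48 * k ^ 5 - 24 * A * k ^ 3) * Real.tan (k * x + c * t) ^ 2
            + 80 * k ^ 5 * Real.tan (k * x + c * t) ^ 4)
          * (k * (1 + Real.tan (k * x + c * t) ^ 2)) :=
    deriv2_comp (fun z => (A - 2 * k ^ 2 * z ^ 2) ^ 2)
      (fun z => -(8 * A * k ^ 2) * z + 16 * k ^ 4 * z ^ 3)
      (fun z => -(8 * A * k ^ 3) + (48 * k ^ 5 - 24 * A * k ^ 3) * z ^ 2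
        + 80 * k ^ 5 * z ^ 4) h1s h2s hcosx
  have L4 : deriv (deriv (deriv (deriv
        (fun x' : ℝ => A - 2 * k ^ 2 * Real.tan (k * x' + c * t) ^ 2)))) x
      = (-(32 * k ^ 5) - 240 * k ^ 5 * Real.tan (k * x + c * t) ^ 2
            - 240 * k ^ 5 * Real.tan (k * x + c * t) ^ 4)
          * (k * (1 + Real.tan (k * x + c * t) ^ 2)) :=
    deriv4_comp (fun z => A - 2 * k ^ 2 * z ^ 2) (fun z => -(4 * k ^ 2) * z)
      (fun z => -(4 * k ^ 3) - 12 * k ^ 3 * z ^ 2)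
      (fun z => -(32 * k ^ 4) * z - 48 * k ^ 4 * z ^ 3)
      (fun z => -(32 * k ^ 5) - 240 * k ^ 5 * z ^ 2 - 240 * k ^ 5 * z ^ 4)
      h1t h2x h3x h4x hcosx
  rw [hft, hfx, hfs, L1, L2, L3, L4]
  have hTT : Real.tan (k * x + c * t) = Real.tan (c * t + k * x) := by rw [add_comm]
  rw [hTT, hA]
  have hk2 : k ^ 2 ≠ 0 := pow_ne_zero 2 hk
  field_simp
  ring
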